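/- Let ρ: ℤ → ℝ satisfy |ρ(k)| ≤ 1 for all k and ρ(−k) = ρ(k). For integers n ≥ 1, p ≥ 1 and q > p, (1/n²) |∑_{k₁,k₂,k₃,k₄=0}^{n−1} ρ(k₁−k₃)^{2p} ρ(k₂−k₄)^{2p} ρ(k₃−k₄)^{2q−2p}| ≤ (C/n) (∑_{j=0}^{n−1} |ρ(j)|^{2p})² (∑_{j=0}^{n−1} |ρ(j)|²) for a constant C independent of n. -/

import Mathlib

open Finset

lemma rho_natAbs (ρ : ℤ → ℝ) (heven : ∀ k, ρ (-k) = ρ k) (z : ℤ) :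
    ρ z = ρ (z.natAbs : ℤ) := by
  have h1 : (z.natAbs : ℤ) = z ∨ (z.natAbs : ℤ) = -z := by omega
  rcases h1 with h | h <;> rw [h]
  exact (heven z).symm

lemma row_bound (ρ : ℤ → ℝ) (heven : ∀ k, ρ (-k) = ρ k) (m n k₀ : ℕ) (hk : k₀ < n) :
    ∑ k ∈ Finset.range n, |ρ ((k : ℤ) - k₀)| ^ m
      ≤ 2 * ∑ j ∈ Finset.range n, |ρ (j : ℤ)| ^ m := by
  set F : ℕ → ℝ := fun j => |ρ (j : ℤ)| ^ m with hF
  have hF0 : ∀ j, 0 ≤ F j := fun j => pow_nonneg (abs_nonneg _) _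
  have h1 : ∑ k ∈ Finset.Ico 0 k₀, F (((k : ℤ) - k₀).natAbs)
      ≤ ∑ j ∈ Finset.range n, F j := by
    have he : ∀ k ∈ Finset.Ico 0 k₀, F (((k : ℤ) - k₀).natAbs) = F (k₀ - k) := by
      intro k hk'
      simp only [Finset.mem_Ico] at hk'
      congr 1
      omega
    rw [Finset.sum_congr rfl he]
    have hinj : ∀ x ∈ Finset.Ico 0 k₀, ∀ y ∈ Finset.Ico 0 k₀,
        k₀ - x = k₀ - y → x = y := by
      intro x hx y hy h
      simp only [Finset.mem_Ico] at hx hy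
      omega
    rw [← Finset.sum_image hinj]
    refine Finset.sum_le_sum_of_subset_of_nonneg ?_ (fun j _ _ => hF0 j)
    intro j hj
    simp only [Finset.mem_image, Finset.mem_Ico] at hj
    simp only [Finset.mem_range]
    omega
  have h2 : ∑ k ∈ Finset.Ico k₀ n, F (((k : ℤ) - k₀).natAbs)
      ≤ ∑ j ∈ Finset.range n, F j := by
    have he : ∀ k ∈ Finset.Ico k₀ n, F (((k : ℤ) - k₀).natAbs) = F (k - k₀) := by
      intro k hk'
      simp only [Finset.mem_Ico] at hk'
      congr 1
      omega
    rw [Finset.sum_congr rfl he]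
    have hinj : ∀ x ∈ Finset.Ico k₀ n, ∀ y ∈ Finset.Ico k₀ n,
        x - k₀ = y - k₀ → x = y := by
      intro x hx y hy h
      simp only [Finset.mem_Ico] at hx hy
      omega
    rw [← Finset.sum_image hinj]
    refine Finset.sum_le_sum_of_subset_of_nonneg ?_ (fun j _ _ => hF0 j)
    intro j hj
    simp only [Finset.mem_image, Finset.mem_Ico] at hj
    simp only [Finset.mem_range]
    omega
  calc ∑ k ∈ Finset.range n, |ρ ((k : ℤ) - k₀)| ^ m
      = ∑ k ∈ Finset.range n, F (((k : ℤ) - k₀).natAbs) := by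
        refine Finset.sum_congr rfl fun k _ => ?_
        simp only [hF]
        rw [rho_natAbs ρ heven ((k : ℤ) - k₀)]
    _ = (∑ k ∈ Finset.Ico 0 k₀, F (((k : ℤ) - k₀).natAbs))
        + ∑ k ∈ Finset.Ico k₀ n, F (((k : ℤ) - k₀).natAbs) := by
        rw [Finset.range_eq_Ico, ← Finset.sum_Ico_consecutive _ (Nat.zero_le k₀) hk.le]
    _ ≤ (∑ j ∈ Finset.range n, F j) + ∑ j ∈ Finset.range n, F j := add_le_add h1 h2
    _ = 2 * ∑ j ∈ Finset.range n, F j := by ring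

lemma sum4_comm (n : ℕ) (f : ℕ → ℕ → ℕ → ℕ → ℝ) :
    (∑ k₁ ∈ Finset.range n, ∑ k₂ ∈ Finset.range n, ∑ k₃ ∈ Finset.range n,
      ∑ k₄ ∈ Finset.range n, f k₁ k₂ k₃ k₄)
    = ∑ k₃ ∈ Finset.range n, ∑ k₄ ∈ Finset.range n, ∑ k₁ ∈ Finset.range n,
      ∑ k₂ ∈ Finset.range n, f k₁ k₂ k₃ k₄ := by
  calc (∑ k₁ ∈ Finset.range n, ∑ k₂ ∈ Finset.range n, ∑ k₃ ∈ Finset.range n,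
      ∑ k₄ ∈ Finset.range n, f k₁ k₂ k₃ k₄)
      = ∑ k₁ ∈ Finset.range n, ∑ k₃ ∈ Finset.range n, ∑ k₂ ∈ Finset.range n,
        ∑ k₄ ∈ Finset.range n, f k₁ k₂ k₃ k₄ :=
        Finset.sum_congr rfl fun k₁ _ => Finset.sum_comm
    _ = ∑ k₃ ∈ Finset.range n, ∑ k₁ ∈ Finset.range n, ∑ k₂ ∈ Finset.range n,
        ∑ k₄ ∈ Finset.range n, f k₁ k₂ k₃ k₄ := Finset.sum_comm
    _ = ∑ k₃ ∈ Finset.range n, ∑ k₁ ∈ Finset.range n, ∑ k₄ ∈ Finset.range n,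
        ∑ k₂ ∈ Finset.range n, f k₁ k₂ k₃ k₄ :=
        Finset.sum_congr rfl fun k₃ _ => Finset.sum_congr rfl fun k₁ _ =>
          Finset.sum_comm
    _ = ∑ k₃ ∈ Finset.range n, ∑ k₄ ∈ Finset.range n, ∑ k₁ ∈ Finset.range n,
        ∑ k₂ ∈ Finset.range n, f k₁ k₂ k₃ k₄ :=
        Finset.sum_congr rfl fun k₃ _ => Finset.sum_comm

/-- Covariance sum estimate: for `|ρ| ≤ 1` even, `p ≥ 1`, `q > p`, there is `C`
(independent of `n`) with
`(1/n²)|∑_{k₁,k₂,k₃,k₄=0}^{n−1} ρ(k₁−k₃)^{2p} ρ(k₂−k₄)^{2p} ρ(k₃−k₄)^{2q−2p}|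
  ≤ (C/n)(∑_{j<n}|ρ(j)|^{2p})²(∑_{j<n}|ρ(j)|²)`. -/
theorem quadruple_sum_bound (ρ : ℤ → ℝ) (hbd : ∀ k, |ρ k| ≤ 1)
    (heven : ∀ k, ρ (-k) = ρ k) (p q : ℕ) (hp : 1 ≤ p) (hpq : p < q) :
    ∃ C : ℝ, 0 < C ∧ ∀ n : ℕ, 1 ≤ n →
      (1 / (n : ℝ) ^ 2) *
        |∑ k₁ ∈ Finset.range n, ∑ k₂ ∈ Finset.range n, ∑ k₃ ∈ Finset.range n,
          ∑ k₄ ∈ Finset.range n,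
            ρ ((k₁ : ℤ) - k₃) ^ (2 * p) * ρ ((k₂ : ℤ) - k₄) ^ (2 * p)
              * ρ ((k₃ : ℤ) - k₄) ^ (2 * q - 2 * p)|
      ≤ (C / n) * (∑ j ∈ Finset.range n, |ρ (j : ℤ)| ^ (2 * p)) ^ 2
          * (∑ j ∈ Finset.range n, |ρ (j : ℤ)| ^ 2) := by
  refine ⟨8, by norm_num, fun n hn => ?_⟩
  have hnR : (0 : ℝ) < n := by exact_mod_cast Nat.lt_of_lt_of_le Nat.zero_lt_one hn
  set S : ℝ := ∑ j ∈ Finset.range n, |ρ (j : ℤ)| ^ (2 * p) with hS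
  set T : ℝ := ∑ j ∈ Finset.range n, |ρ (j : ℤ)| ^ 2 with hT
  have hS0 : 0 ≤ S := Finset.sum_nonneg fun j _ => pow_nonneg (abs_nonneg _) _
  have hT0 : 0 ≤ T := Finset.sum_nonneg fun j _ => pow_nonneg (abs_nonneg _) _
  -- absolute-value term bound
  have key : |∑ k₁ ∈ Finset.range n, ∑ k₂ ∈ Finset.range n, ∑ k₃ ∈ Finset.range n,
      ∑ k₄ ∈ Finset.range n,
        ρ ((k₁ : ℤ) - k₃) ^ (2 * p) * ρ ((k₂ : ℤ) - k₄) ^ (2 * p)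
          * ρ ((k₃ : ℤ) - k₄) ^ (2 * q - 2 * p)|
      ≤ 8 * n * S ^ 2 * T := by
    have step1 : |∑ k₁ ∈ Finset.range n, ∑ k₂ ∈ Finset.range n, ∑ k₃ ∈ Finset.range n,
        ∑ k₄ ∈ Finset.range n,
          ρ ((k₁ : ℤ) - k₃) ^ (2 * p) * ρ ((k₂ : ℤ) - k₄) ^ (2 * p)
            * ρ ((k₃ : ℤ) - k₄) ^ (2 * q - 2 * p)|
        ≤ ∑ k₁ ∈ Finset.range n, ∑ k₂ ∈ Finset.range n, ∑ k₃ ∈ Finset.range n,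
          ∑ k₄ ∈ Finset.range n,
            |ρ ((k₁ : ℤ) - k₃)| ^ (2 * p) * |ρ ((k₂ : ℤ) - k₄)| ^ (2 * p)
              * |ρ ((k₃ : ℤ) - k₄)| ^ 2 := by
      refine (Finset.abs_sum_le_sum_abs _ _).trans (Finset.sum_le_sum fun k₁ _ => ?_)
      refine (Finset.abs_sum_le_sum_abs _ _).trans (Finset.sum_le_sum fun k₂ _ => ?_)
      refine (Finset.abs_sum_le_sum_abs _ _).trans (Finset.sum_le_sum fun k₃ _ => ?_)
      refine (Finset.abs_sum_le_sum_abs _ _).trans (Finset.sum_le_sum fun k₄ _ => ?_)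
      rw [abs_mul, abs_mul, abs_pow, abs_pow, abs_pow]
      have hle : |ρ ((k₃ : ℤ) - k₄)| ^ (2 * q - 2 * p) ≤ |ρ ((k₃ : ℤ) - k₄)| ^ 2 :=
        pow_le_pow_of_le_one (abs_nonneg _) (hbd _) (by omega)
      have h1 : (0 : ℝ) ≤ |ρ ((k₁ : ℤ) - k₃)| ^ (2 * p) * |ρ ((k₂ : ℤ) - k₄)| ^ (2 * p) :=
        mul_nonneg (pow_nonneg (abs_nonneg _) _) (pow_nonneg (abs_nonneg _) _)
      exact mul_le_mul_of_nonneg_left hle h1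
    have step2 : (∑ k₁ ∈ Finset.range n, ∑ k₂ ∈ Finset.range n, ∑ k₃ ∈ Finset.range n,
          ∑ k₄ ∈ Finset.range n,
            |ρ ((k₁ : ℤ) - k₃)| ^ (2 * p) * |ρ ((k₂ : ℤ) - k₄)| ^ (2 * p)
              * |ρ ((k₃ : ℤ) - k₄)| ^ 2)
        ≤ 8 * n * S ^ 2 * T := by
      rw [sum4_comm]
      have inner : ∀ k₃ ∈ Finset.range n, ∀ k₄ ∈ Finset.range n,
          (∑ k₁ ∈ Finset.range n, ∑ k₂ ∈ Finset.range n,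
            |ρ ((k₁ : ℤ) - k₃)| ^ (2 * p) * |ρ ((k₂ : ℤ) - k₄)| ^ (2 * p)
              * |ρ ((k₃ : ℤ) - k₄)| ^ 2)
          ≤ (2 * S) * (2 * S) * |ρ ((k₃ : ℤ) - k₄)| ^ 2 := by
        intro k₃ hk₃ k₄ hk₄
        simp only [Finset.mem_range] at hk₃ hk₄
        have hrw : (∑ k₁ ∈ Finset.range n, ∑ k₂ ∈ Finset.range n,
            |ρ ((k₁ : ℤ) - k₃)| ^ (2 * p) * |ρ ((k₂ : ℤ) - k₄)| ^ (2 * p)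
              * |ρ ((k₃ : ℤ) - k₄)| ^ 2)
            = (∑ k₁ ∈ Finset.range n, |ρ ((k₁ : ℤ) - k₃)| ^ (2 * p))
              * (∑ k₂ ∈ Finset.range n, |ρ ((k₂ : ℤ) - k₄)| ^ (2 * p))
              * |ρ ((k₃ : ℤ) - k₄)| ^ 2 := by
          rw [Finset.sum_mul, Finset.sum_mul]
          refine Finset.sum_congr rfl fun k₁ _ => ?_
          rw [Finset.mul_sum, Finset.sum_mul]
        rw [hrw]
        have hb1 := row_bound ρ heven (2 * p) n k₃ hk₃
        have hb2 := row_bound ρ heven (2 * p) n k₄ hk₄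
        have hc : (0 : ℝ) ≤ |ρ ((k₃ : ℤ) - k₄)| ^ 2 := pow_nonneg (abs_nonneg _) _
        refine mul_le_mul_of_nonneg_right ?_ hc
        refine mul_le_mul hb1 hb2 (Finset.sum_nonneg fun _ _ =>
          pow_nonneg (abs_nonneg _) _) (by positivity)
      calc (∑ k₃ ∈ Finset.range n, ∑ k₄ ∈ Finset.range n, ∑ k₁ ∈ Finset.range n,
            ∑ k₂ ∈ Finset.range n,
              |ρ ((k₁ : ℤ) - k₃)| ^ (2 * p) * |ρ ((k₂ : ℤ) - k₄)| ^ (2 * p)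
                * |ρ ((k₃ : ℤ) - k₄)| ^ 2)
          ≤ ∑ k₃ ∈ Finset.range n, ∑ k₄ ∈ Finset.range n,
              (2 * S) * (2 * S) * |ρ ((k₃ : ℤ) - k₄)| ^ 2 :=
            Finset.sum_le_sum fun k₃ hk₃ => Finset.sum_le_sum fun k₄ hk₄ =>
              inner k₃ hk₃ k₄ hk₄
        _ = (2 * S) * (2 * S) * ∑ k₃ ∈ Finset.range n, ∑ k₄ ∈ Finset.range n,
              |ρ ((k₃ : ℤ) - k₄)| ^ 2 := by
            simp_rw [Finset.mul_sum]
        _ ≤ (2 * S) * (2 * S) * ∑ k₃ ∈ Finset.range n, (2 * T) := by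
            refine mul_le_mul_of_nonneg_left ?_ (by positivity)
            refine Finset.sum_le_sum fun k₃ hk₃ => ?_
            have : (∑ k₄ ∈ Finset.range n, |ρ ((k₃ : ℤ) - k₄)| ^ 2)
                = ∑ k₄ ∈ Finset.range n, |ρ ((k₄ : ℤ) - k₃)| ^ 2 := by
              refine Finset.sum_congr rfl fun k₄ _ => ?_
              have : ρ ((k₃ : ℤ) - k₄) = ρ ((k₄ : ℤ) - k₃) := by
                rw [← heven ((k₄ : ℤ) - k₃)]; ring_nf
              rw [this]
            rw [this]
            exact row_bound ρ heven 2 n k₃ (Finset.mem_range.mp hk₃)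
        _ = (2 * S) * (2 * S) * (n * (2 * T)) := by
            rw [Finset.sum_const, Finset.card_range, nsmul_eq_mul]
        _ = 8 * n * S ^ 2 * T := by ring
    exact step1.trans step2
  calc (1 / (n : ℝ) ^ 2) *
        |∑ k₁ ∈ Finset.range n, ∑ k₂ ∈ Finset.range n, ∑ k₃ ∈ Finset.range n,
          ∑ k₄ ∈ Finset.range n,
            ρ ((k₁ : ℤ) - k₃) ^ (2 * p) * ρ ((k₂ : ℤ) - k₄) ^ (2 * p)
              * ρ ((k₃ : ℤ) - k₄) ^ (2 * q - 2 * p)|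
      ≤ (1 / (n : ℝ) ^ 2) * (8 * n * S ^ 2 * T) :=
        mul_le_mul_of_nonneg_left key (by positivity)
    _ = (8 / n) * S ^ 2 * T := by
        field_simp
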